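/- arXiv:2407.08006 — 4 statements merged into one kernel-verified Lean document; each statement's English description precedes it below -/
import Mathlib

section
/- Let n ≥ 1 and let H : ℝ^{2n} × [0,∞) → ℝ be such that for each t the map x ↦ H(x,t) is continuously differentiable. Suppose ψ : ℝ^{2n} × [0,∞) → ℂ is differentiable in x and in t and satisfies the Koopman–von Neumann (transport) equation ∂ψ/∂t(x,t) = L_t[ψ(·,t)](x) for all (x,t) ∈ ℝ^{2n} × (0,∞), and suppose ρ₀ : ℝ^{2n} → [0,∞) satisfies |ψ(x,0)|² = ρ₀(x) for all x. Then the function ρ(x,t) := |ψ(x,t)|² satisfies Liouville's equation ∂ρ/∂t(x,t) = L_t[ρ(·,t)](x) for all (x,t) ∈ ℝ^{2n} × (0,∞), together with the initial condition ρ(x,0) = ρ₀(x) for all x ∈ ℝ^{2n}. -/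
open scoped BigOperators

/-- The real Fréchet derivative of `Complex.normSq` at `z`. -/
noncomputable def nsD (z : ℂ) : ℂ →L[ℝ] ℝ :=
  (2 * z.re) • Complex.reCLM + (2 * z.im) • Complex.imCLM

lemma hasFDerivAt_normSq (z : ℂ) : HasFDerivAt Complex.normSq (nsD z) z := by
  have hre : HasFDerivAt (fun w : ℂ => w.re) (Complex.reCLM : ℂ →L[ℝ] ℝ) z :=
    Complex.reCLM.hasFDerivAt
  have him : HasFDerivAt (fun w : ℂ => w.im) (Complex.imCLM : ℂ →L[ℝ] ℝ) z :=
    Complex.imCLM.hasFDerivAt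
  have h := (hre.mul hre).add (him.mul him)
  have heq : Complex.normSq = fun w : ℂ => w.re * w.re + w.im * w.im := by
    funext w; simp [Complex.normSq_apply]
  rw [heq]
  refine h.congr_fderiv ?_
  ext w
  simp [nsD]
  ring

/-- The Liouville operator associated to a classical Hamiltonian `H` on phase space `ℝ^{2n}`:
`L[f](x) = Σ_{j=1}^n ( ∂H/∂x_j(x) · ∂f/∂x_{n+j}(x) − ∂H/∂x_{n+j}(x) · ∂f/∂x_j(x) )`. -/
noncomputable def liouville {n : ℕ} {E : Type*} [NormedAddCommGroup E] [NormedSpace ℝ E]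
    (H : (Fin (2 * n) → ℝ) → ℝ) (f : (Fin (2 * n) → ℝ) → E) (x : Fin (2 * n) → ℝ) : E :=
  ∑ j : Fin n,
    ((fderiv ℝ H x (Pi.single (⟨j.1, by have := j.isLt; omega⟩ : Fin (2 * n)) 1)) •
        fderiv ℝ f x (Pi.single (⟨n + j.1, by have := j.isLt; omega⟩ : Fin (2 * n)) 1) -
      (fderiv ℝ H x (Pi.single (⟨n + j.1, by have := j.isLt; omega⟩ : Fin (2 * n)) 1)) •
        fderiv ℝ f x (Pi.single (⟨j.1, by have := j.isLt; omega⟩ : Fin (2 * n)) 1))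

/-- Koopman–von Neumann: if `ψ` solves the transport (KvN) equation
`∂ψ/∂t = L_t[ψ(·,t)]` with Born density `|ψ(·,0)|² = ρ₀`, then the Born density
`ρ(x,t) = |ψ(x,t)|²` solves Liouville's equation `∂ρ/∂t = L_t[ρ(·,t)]` with
initial condition `ρ(·,0) = ρ₀`. -/
theorem kvn_born_density_solves_liouville (n : ℕ) (hn : 1 ≤ n)
    (H : (Fin (2 * n) → ℝ) → ℝ → ℝ)
    (hH : ∀ t : ℝ, 0 ≤ t → ContDiff ℝ 1 (fun x => H x t))
    (ψ : (Fin (2 * n) → ℝ) → ℝ → ℂ)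
    (hψx : ∀ (x : Fin (2 * n) → ℝ) (t : ℝ), 0 ≤ t → DifferentiableAt ℝ (fun y => ψ y t) x)
    (hψt : ∀ (x : Fin (2 * n) → ℝ) (t : ℝ), 0 ≤ t → DifferentiableAt ℝ (ψ x) t)
    (hKvN : ∀ (x : Fin (2 * n) → ℝ) (t : ℝ), 0 < t →
      deriv (ψ x) t = liouville (fun y => H y t) (fun y => ψ y t) x)
    (ρ₀ : (Fin (2 * n) → ℝ) → ℝ) (hρ₀nonneg : ∀ x, 0 ≤ ρ₀ x)
    (hρ₀ : ∀ x, Complex.normSq (ψ x 0) = ρ₀ x) :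
    (∀ (x : Fin (2 * n) → ℝ) (t : ℝ), 0 < t →
        deriv (fun s => Complex.normSq (ψ x s)) t
          = liouville (fun y => H y t) (fun y => Complex.normSq (ψ y t)) x)
    ∧ (∀ x : Fin (2 * n) → ℝ, Complex.normSq (ψ x 0) = ρ₀ x) := by
  refine ⟨fun x t ht => ?_, hρ₀⟩
  set z := ψ x t with hz
  -- time derivative via chain rule
  have hdt : HasDerivAt (ψ x) (deriv (ψ x) t) t := (hψt x t ht.le).hasDerivAt
  have htime : HasDerivAt (fun s => Complex.normSq (ψ x s)) (nsD z (deriv (ψ x) t)) t :=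
    (hasFDerivAt_normSq z).comp_hasDerivAt t hdt
  rw [htime.deriv, hKvN x t ht]
  -- space derivative of the Born density via chain rule
  have hfx : HasFDerivAt (fun y => ψ y t) (fderiv ℝ (fun y => ψ y t) x) x :=
    (hψx x t ht.le).hasFDerivAt
  have hcomp : HasFDerivAt (fun y => Complex.normSq (ψ y t))
      ((nsD z).comp (fderiv ℝ (fun y => ψ y t) x)) x :=
    (hasFDerivAt_normSq z).comp x hfx
  have hρderiv : fderiv ℝ (fun y => Complex.normSq (ψ y t)) x
      = (nsD z).comp (fderiv ℝ (fun y => ψ y t) x) := hcomp.fderiv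
  simp only [liouville, hρderiv, ContinuousLinearMap.comp_apply]
  rw [map_sum]
  exact Finset.sum_congr rfl fun j _ => by rw [map_sub, map_smul, map_smul]
end

section
/- Let n ≥ 1 and let H : ℝ^{2n} → ℝ be twice continuously differentiable, and let f : ℝ^{2n} → ℂ be continuously differentiable with compact support. Then the Lebesgue integral of the Liouville operator applied to f vanishes: ∫_{ℝ^{2n}} L[f](x) dx = 0. -/
open scoped BigOperators
open MeasureTheory

/-- integral of a partial derivative of a C¹ compactly supported function vanishes -/
lemma integral_fderiv_single_eq_zero {m : ℕ} (g : (Fin m → ℝ) → ℂ)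
    (hg : ContDiff ℝ 1 g) (hgc : HasCompactSupport g) (i : Fin m) :
    ∫ x : Fin m → ℝ, fderiv ℝ g x (Pi.single i 1) = 0 := by
  rcases m with _ | k
  · exact i.elim0
  set v : Fin (k + 1) → ℝ := Pi.single i 1 with hv
  set g' : (Fin (k + 1) → ℝ) → ℂ := fun x => fderiv ℝ g x v with hg'
  have hg'cont : Continuous g' :=
    (hg.continuous_fderiv one_ne_zero).clm_apply continuous_const
  have hg'cs : HasCompactSupport g' := hgc.fderiv_apply ℝ v
  have hg'int : Integrable g' := hg'cont.integrable_of_hasCompactSupport hg'cs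
  set e := MeasurableEquiv.piFinSuccAbove (fun _ : Fin (k + 1) => ℝ) i with he
  have hme : MeasurePreserving e.symm volume volume :=
    (volume_preserving_piFinSuccAbove (fun _ : Fin (k + 1) => ℝ) i).symm
  have hFint : Integrable (fun p : ℝ × (Fin k → ℝ) => g' (e.symm p)) :=
    (hme.integrable_comp_emb e.symm.measurableEmbedding).2 hg'int
  calc ∫ x, g' x = ∫ p : ℝ × (Fin k → ℝ), g' (e.symm p) :=
        (hme.integral_comp e.symm.measurableEmbedding g').symm
    _ = ∫ t : ℝ, ∫ r : Fin k → ℝ, g' (e.symm (t, r)) := by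
        rw [MeasureTheory.Measure.volume_eq_prod] at hFint ⊢
        exact integral_prod _ hFint
    _ = ∫ r : Fin k → ℝ, ∫ t : ℝ, g' (e.symm (t, r)) := by
        rw [MeasureTheory.Measure.volume_eq_prod] at hFint
        exact integral_integral_swap hFint
    _ = 0 := by
        rw [← integral_zero (Fin k → ℝ) ℂ]
        congr 1
        funext r
        -- inner integral over the line vanishes
        have hesymm : ∀ t : ℝ, e.symm (t, r) = i.insertNth t r := fun t => rfl
        set A : ℝ → (Fin (k + 1) → ℝ) := fun t => i.insertNth t r with hA
        have hAaff : ∀ t : ℝ, A t = t • v + i.insertNth 0 r := by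
          intro t
          funext j
          refine Fin.succAboveCases i ?_ ?_ j
          · simp [hA, hv]
          · intro j
            simp [hA, hv, Pi.single_eq_of_ne (Fin.succAbove_ne i j)]
        have hAderiv : ∀ t : ℝ, HasDerivAt A v t := by
          intro t
          have : HasDerivAt (fun t : ℝ => t • v + i.insertNth 0 r) v t := by
            simpa using ((hasDerivAt_id t).smul_const v).add_const (i.insertNth 0 r)
          exact this.congr_deriv rfl |>.congr_of_eventuallyEq
            (Filter.Eventually.of_forall fun s => (hAaff s))
        have hAnorm : ∀ t : ℝ, |t| ≤ ‖A t‖ := by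
          intro t
          have : A t i = t := by simp [hA]
          calc |t| = ‖A t i‖ := by rw [this, Real.norm_eq_abs]
            _ ≤ ‖A t‖ := norm_le_pi_norm (A t) i
        -- compact support of compositions with A
        have hcompsupp : ∀ (φ : (Fin (k + 1) → ℝ) → ℂ), HasCompactSupport φ →
            HasCompactSupport (fun t => φ (A t)) := by
          intro φ hφ
          obtain ⟨R, hR⟩ := hφ.isBounded.subset_closedBall 0
          apply HasCompactSupport.intro (isCompact_Icc (a := -R) (b := R))
          intro t ht
          apply image_eq_zero_of_notMem_tsupport
          intro hmem
          have := hR hmem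
          rw [Metric.mem_closedBall, dist_zero_right] at this
          have : |t| ≤ R := le_trans (hAnorm t) this
          simp only [Set.mem_Icc, not_and_or, not_le] at ht
          rcases ht with h | h <;> [linarith [abs_nonneg t, neg_le_abs t]; linarith [le_abs_self t]]
        have hφderiv : ∀ t : ℝ, HasDerivAt (fun s => g (A s)) (g' (A t)) t := fun t =>
          ((hg.differentiable one_ne_zero (A t)).hasFDerivAt.comp_hasDerivAt t (hAderiv t))
        have hAcont : Continuous A :=
          continuous_iff_continuousAt.2 fun t => (hAderiv t).continuousAt
        have hφint : Integrable (fun t => g (A t)) :=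
          (hg.continuous.comp hAcont).integrable_of_hasCompactSupport (hcompsupp g hgc)
        have hφ'int : Integrable (fun t => g' (A t)) :=
          (hg'cont.comp hAcont).integrable_of_hasCompactSupport (hcompsupp g' hg'cs)
        exact integral_eq_zero_of_hasDerivAt_of_integrable hφderiv hφ'int hφint

lemma pair_integral_zero {m : ℕ} (H : (Fin m → ℝ) → ℝ) (hH : ContDiff ℝ 2 H)
    (f : (Fin m → ℝ) → ℂ) (hf : ContDiff ℝ 1 f) (hfc : HasCompactSupport f) (p q : Fin m) :
    ∫ x : Fin m → ℝ, ((fderiv ℝ H x (Pi.single p 1)) • fderiv ℝ f x (Pi.single q 1)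
      - (fderiv ℝ H x (Pi.single q 1)) • fderiv ℝ f x (Pi.single p 1)) = 0 := by
  set vp : Fin m → ℝ := Pi.single p 1
  set vq : Fin m → ℝ := Pi.single q 1
  have hH' : ContDiff ℝ 1 (fderiv ℝ H) := hH.fderiv_right (by norm_num)
  set c : (Fin m → ℝ) → (Fin m → ℝ) → ℝ := fun v x => fderiv ℝ H x v with hc
  have hccd : ∀ v, ContDiff ℝ 1 (c v) := fun v => hH'.clm_apply contDiff_const
  set g : (Fin m → ℝ) → (Fin m → ℝ) → ℂ := fun v x => c v x • f x with hgdef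
  have hgcd : ∀ v, ContDiff ℝ 1 (g v) := fun v => (hccd v).smul hf
  have hgcs : ∀ v, HasCompactSupport (g v) := fun v => hfc.smul_left (f := c v)
  -- second derivative of H
  have hd2 : ∀ x, fderiv ℝ (c vp) x vq = fderiv ℝ (c vq) x vp := by
    intro x
    have hdH : Differentiable ℝ H := hH.differentiable two_ne_zero
    have hdH' : DifferentiableAt ℝ (fderiv ℝ H) x := (hH'.differentiable one_ne_zero) x
    have h1 : ∀ v, fderiv ℝ (c v) x = (fderiv ℝ (fderiv ℝ H) x).flip v := by
      intro v
      rw [hc]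
      rw [fderiv_clm_apply hdH' (differentiableAt_const v)]
      simp
    rw [h1 vp, h1 vq]
    simp only [ContinuousLinearMap.flip_apply]
    exact (second_derivative_symmetric (fun y => (hdH y).hasFDerivAt)
      hdH'.hasFDerivAt vq vp)
  -- product rule
  have hprod : ∀ v w x, fderiv ℝ (g v) x w
      = c v x • fderiv ℝ f x w + (fderiv ℝ (c v) x w) • f x := by
    intro v w x
    rw [hgdef]
    show fderiv ℝ (c v • f) x w = _
    rw [fderiv_smul ((hccd v).differentiable one_ne_zero x) (hf.differentiable one_ne_zero x)]
    simp
  have hpt : ∀ x, (c vp x) • fderiv ℝ f x vq - (c vq x) • fderiv ℝ f x vp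
      = fderiv ℝ (g vp) x vq - fderiv ℝ (g vq) x vp := by
    intro x
    rw [hprod vp vq x, hprod vq vp x, hd2 x]
    ring
  have hint : ∀ v w, Integrable (fun x => fderiv ℝ (g v) x w) := by
    intro v w
    exact (((hgcd v).continuous_fderiv one_ne_zero).clm_apply continuous_const).integrable_of_hasCompactSupport
      ((hgcs v).fderiv_apply ℝ w)
  calc ∫ x, ((c vp x) • fderiv ℝ f x vq - (c vq x) • fderiv ℝ f x vp)
      = ∫ x, (fderiv ℝ (g vp) x vq - fderiv ℝ (g vq) x vp) := by
        congr 1; funext x; exact hpt x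
    _ = (∫ x, fderiv ℝ (g vp) x vq) - ∫ x, fderiv ℝ (g vq) x vp :=
        integral_sub (hint vp vq) (hint vq vp)
    _ = 0 := by
        rw [integral_fderiv_single_eq_zero (g vp) (hgcd vp) (hgcs vp) q,
          integral_fderiv_single_eq_zero (g vq) (hgcd vq) (hgcs vq) p, sub_zero]

theorem integral_liouville_eq_zero' (n : ℕ) (hn : 1 ≤ n)
    (H : (Fin (2 * n) → ℝ) → ℝ) (hH : ContDiff ℝ 2 H)
    (f : (Fin (2 * n) → ℝ) → ℂ)
    (hf : ContDiff ℝ 1 f) (hfc : HasCompactSupport f) :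
    ∫ x : Fin (2 * n) → ℝ,
      (∑ j : Fin n,
        ((fderiv ℝ H x (Pi.single (⟨j.1, by have := j.isLt; omega⟩ : Fin (2 * n)) 1)) •
            fderiv ℝ f x (Pi.single (⟨n + j.1, by have := j.isLt; omega⟩ : Fin (2 * n)) 1) -
          (fderiv ℝ H x (Pi.single (⟨n + j.1, by have := j.isLt; omega⟩ : Fin (2 * n)) 1)) •
            fderiv ℝ f x (Pi.single (⟨j.1, by have := j.isLt; omega⟩ : Fin (2 * n)) 1))) = 0 := by
  have hint : ∀ p q : Fin (2 * n),
      Integrable (fun x => (fderiv ℝ H x (Pi.single p 1)) • fderiv ℝ f x (Pi.single q 1)) := by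
    intro p q
    exact (((hH.continuous_fderiv two_ne_zero).clm_apply continuous_const).smul
        ((hf.continuous_fderiv one_ne_zero).clm_apply continuous_const)).integrable_of_hasCompactSupport
      (hfc.fderiv_apply ℝ (Pi.single q 1)).smul_left
  exact (integral_finset_sum Finset.univ fun j _ => Integrable.sub (hint _ _) (hint _ _)).trans
    (Finset.sum_eq_zero fun j _ => pair_integral_zero H hH f hf hfc _ _)

/-- For a twice continuously differentiable Hamiltonian and a `C¹` compactly supported
function `f`, the Lebesgue integral of `L[f]` over phase space vanishes. -/
theorem integral_liouville_eq_zero (n : ℕ) (hn : 1 ≤ n)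
    (H : (Fin (2 * n) → ℝ) → ℝ) (hH : ContDiff ℝ 2 H)
    (f : (Fin (2 * n) → ℝ) → ℂ)
    (hf : ContDiff ℝ 1 f) (hfc : HasCompactSupport f) :
    ∫ x : Fin (2 * n) → ℝ, liouville H f x = 0 := by
  simpa only [liouville] using integral_liouville_eq_zero' n hn H hH f hf hfc
end

section
/- Let a₂, a₃, a₄ be natural numbers and set a = 1 + a₂ + a₃ + a₄. Then for all real numbers x₁, x₂, x₃, x₄, the following polynomial identity holds: x₁ · x₂^{a₂} · x₃^{a₃} · x₄^{a₄} = Σ_{v₂=0}^{a₂} Σ_{v₃=0}^{a₃} Σ_{v₄=0}^{a₄} C(v₂,v₃,v₄) · ( x₁ + (a₂ − 2v₂)·x₂ + (a₃ − 2v₃)·x₃ + (a₄ − 2v₄)·x₄ )^{a}, where C(v₂,v₃,v₄) = ( (−1)^{v₂+v₃+v₄} / (2^{a−1} · a!) ) · binom(a₂,v₂) · binom(a₃,v₃) · binom(a₄,v₄). -/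
open scoped BigOperators

open Finset PowerSeries

noncomputable section Aux

/-- The alternating binomial sum at the heart of the decomposition. -/
def Skey (m k : ℕ) : ℝ :=
  ∑ v ∈ Finset.range (m + 1), (-1 : ℝ) ^ v * (m.choose v) * ((m : ℝ) - 2 * v) ^ k

/-- `e^{cX}` as a real power series. -/
def Eexp (c : ℝ) : ℝ⟦X⟧ := rescale c (PowerSeries.exp ℝ)

lemma coeff_Eexp (c : ℝ) (n : ℕ) : coeff n (Eexp c) = c ^ n / n.factorial := by
  simp [Eexp, coeff_rescale, PowerSeries.coeff_exp]
  push_cast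
  ring

lemma Eexp_mul (a b : ℝ) : Eexp a * Eexp b = Eexp (a + b) :=
  PowerSeries.exp_mul_exp_eq_exp_add a b

lemma Eexp_zero : Eexp 0 = 1 := by
  ext n
  rw [coeff_Eexp]
  cases n <;> simp

lemma Eexp_pow (c : ℝ) (t : ℕ) : (Eexp c) ^ t = Eexp (t * c) := by
  induction t with
  | zero => simp [Eexp_zero]
  | succ t ih =>
      rw [pow_succ, ih, Eexp_mul]
      push_cast
      ring_nf

end Aux

noncomputable section Aux2

/-- `(e^X - e^{-X})/X`, the even part shifted down. -/
def Ufun : ℝ⟦X⟧ :=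
  PowerSeries.mk fun n => if Even n then 2 / ((n + 1).factorial : ℝ) else 0

def Dfun : ℝ⟦X⟧ := Eexp 1 - Eexp (-1)

lemma Dfun_eq : Dfun = X * Ufun := by
  ext n
  cases n with
  | zero =>
      simp only [Dfun, map_sub, PowerSeries.coeff_zero_eq_constantCoeff, map_mul]
      rw [← PowerSeries.coeff_zero_eq_constantCoeff_apply, ← PowerSeries.coeff_zero_eq_constantCoeff_apply,
        coeff_Eexp, coeff_Eexp]
      norm_num
  | succ n =>
      rw [PowerSeries.coeff_succ_X_mul]
      simp only [Dfun, map_sub, coeff_Eexp, Ufun, PowerSeries.coeff_mk]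
      rcases Nat.even_or_odd n with h | h
      · rw [if_pos h]
        have : (-1 : ℝ) ^ (n + 1) = -1 := by
          rw [pow_succ, h.neg_one_pow]; ring
        rw [this]
        ring
      · rw [if_neg (by simpa using h)]
        have : (-1 : ℝ) ^ (n + 1) = 1 := by
          rw [pow_succ, h.neg_one_pow]; ring
        rw [this, one_pow]
        ring

lemma constCoeff_Ufun : PowerSeries.constantCoeff Ufun = 2 := by
  rw [← PowerSeries.coeff_zero_eq_constantCoeff_apply]
  simp [Ufun]

lemma coeff_one_Ufun : coeff 1 Ufun = 0 := by
  simp [Ufun]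

lemma coeff_one_mul (f g : ℝ⟦X⟧) :
    coeff 1 (f * g) = PowerSeries.constantCoeff f * coeff 1 g
      + coeff 1 f * PowerSeries.constantCoeff g := by
  rw [PowerSeries.coeff_mul]
  rw [Finset.Nat.sum_antidiagonal_eq_sum_range_succ_mk]
  rw [Finset.sum_range_succ, Finset.sum_range_one]
  simp [PowerSeries.coeff_zero_eq_constantCoeff]

lemma coeff_one_Ufun_pow (t : ℕ) : coeff 1 (Ufun ^ t) = 0 := by
  induction t with
  | zero => simp
  | succ t ih => rw [pow_succ, coeff_one_mul, ih, coeff_one_Ufun]; ring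

end Aux2

noncomputable section Aux3

lemma coeff_Dpow (m k : ℕ) :
    (PowerSeries.coeff k) (Dfun ^ m) =
      ∑ v ∈ Finset.range (m + 1),
        (-1 : ℝ) ^ (v + m) * (m.choose v) * (2 * (v : ℝ) - m) ^ k / k.factorial := by
  rw [Dfun, sub_pow, map_sum]
  refine Finset.sum_congr rfl fun v hv => ?_
  have hv' : v ≤ m := by simpa [Nat.lt_succ_iff] using Finset.mem_range.mp hv
  have h1 : Eexp 1 ^ v * Eexp (-1) ^ (m - v) = Eexp (2 * (v : ℝ) - m) := by
    rw [Eexp_pow, Eexp_pow, Eexp_mul]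
    congr 1
    rw [Nat.cast_sub hv']; ring
  have h2 : ((-1 : ℝ⟦X⟧) ^ (v + m) * Eexp 1 ^ v * Eexp (-1) ^ (m - v) * (m.choose v : ℝ⟦X⟧))
      = ((-1 : ℝ) ^ (v + m) * (m.choose v)) • Eexp (2 * (v : ℝ) - m) := by
    rw [PowerSeries.smul_eq_C_mul, map_mul, map_pow, map_neg, map_one, map_natCast,
      mul_assoc ((-1 : ℝ⟦X⟧) ^ (v + m)), h1]
    ring
  rw [h2, map_smul, smul_eq_mul, coeff_Eexp]
  ring

lemma Skey_eq (m k : ℕ) :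
    Skey m k = (k.factorial : ℝ) * (PowerSeries.coeff k) (Dfun ^ m) := by
  rw [coeff_Dpow, Finset.mul_sum, Skey, ← Finset.sum_range_reflect]
  refine Finset.sum_congr rfl fun v hv => ?_
  have hv' : v ≤ m := by simpa [Nat.lt_succ_iff] using Finset.mem_range.mp hv
  have hc : ((m - v : ℕ) : ℝ) = (m : ℝ) - v := Nat.cast_sub hv'
  have hch : m.choose (m - v) = m.choose v := Nat.choose_symm hv'
  have hs : (-1 : ℝ) ^ (m - v) = (-1 : ℝ) ^ (v + m) := by
    rw [show v + m = (m - v) + 2 * v by omega, pow_add, pow_mul]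
    simp
  rw [show m + 1 - 1 - v = m - v from by omega, hch, hc, hs]
  have hk : (k.factorial : ℝ) ≠ 0 := by exact_mod_cast k.factorial_ne_zero
  rw [mul_comm ((k.factorial : ℝ)), div_mul_cancel₀ _ hk]
  ring

end Aux3

noncomputable section Aux4

lemma coeff_Dpow' (m k : ℕ) :
    (PowerSeries.coeff k) (Dfun ^ m)
      = if m ≤ k then (PowerSeries.coeff (k - m)) (Ufun ^ m) else 0 := by
  rw [Dfun_eq, mul_pow, PowerSeries.coeff_X_pow_mul']

lemma Skey_lt (m k : ℕ) (h : k < m) : Skey m k = 0 := by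
  rw [Skey_eq, coeff_Dpow', if_neg (by omega)]
  ring

lemma Skey_self (m : ℕ) : Skey m m = 2 ^ m * m.factorial := by
  rw [Skey_eq, coeff_Dpow', if_pos le_rfl, Nat.sub_self,
    PowerSeries.coeff_zero_eq_constantCoeff_apply, map_pow, constCoeff_Ufun]
  ring

lemma Skey_succ (m : ℕ) : Skey m (m + 1) = 0 := by
  rw [Skey_eq, coeff_Dpow', if_pos (by omega), show m + 1 - m = 1 from by omega,
    coeff_one_Ufun_pow]
  ring

lemma Skey_prod_eq_zero (a₂ a₃ a₄ k₂ k₃ k₄ : ℕ)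
    (hsum : k₂ + k₃ + k₄ ≤ 1 + a₂ + a₃ + a₄)
    (hne : ¬(k₂ = a₂ ∧ k₃ = a₃ ∧ k₄ = a₄)) :
    Skey a₂ k₂ * Skey a₃ k₃ * Skey a₄ k₄ = 0 := by
  rcases lt_or_ge k₂ a₂ with h | h2
  · rw [Skey_lt _ _ h]; ring
  rcases lt_or_ge k₃ a₃ with h | h3
  · rw [Skey_lt _ _ h]; ring
  rcases lt_or_ge k₄ a₄ with h | h4
  · rw [Skey_lt _ _ h]; ring
  have : k₂ = a₂ + 1 ∧ k₃ = a₃ ∧ k₄ = a₄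
      ∨ k₂ = a₂ ∧ k₃ = a₃ + 1 ∧ k₄ = a₄
      ∨ k₂ = a₂ ∧ k₃ = a₃ ∧ k₄ = a₄ + 1 := by omega
  rcases this with ⟨h, -, -⟩ | ⟨-, h, -⟩ | ⟨-, -, h⟩
  · rw [h, Skey_succ]; ring
  · rw [h, Skey_succ]; ring
  · rw [h, Skey_succ]; ring

end Aux4

section Gen

lemma gen1 (m N : ℕ) (y z : ℝ) :
    ∑ v ∈ Finset.range (m + 1),
        (-1 : ℝ) ^ v * (m.choose v) * (y + ((m : ℝ) - 2 * v) * z) ^ N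
      = ∑ k ∈ Finset.range (N + 1),
          (N.choose k : ℝ) * Skey m k * z ^ k * y ^ (N - k) := by
  have step1 : ∀ v ∈ Finset.range (m + 1),
      (-1 : ℝ) ^ v * (m.choose v) * (y + ((m : ℝ) - 2 * v) * z) ^ N
        = ∑ k ∈ Finset.range (N + 1),
            (-1 : ℝ) ^ v * (m.choose v)
              * (((m : ℝ) - 2 * v) ^ k * z ^ k * y ^ (N - k) * (N.choose k)) := by
    intro v _
    rw [add_comm, add_pow, Finset.mul_sum]
    refine Finset.sum_congr rfl fun k _ => ?_
    rw [mul_pow]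
  rw [Finset.sum_congr rfl step1, Finset.sum_comm]
  refine Finset.sum_congr rfl fun k _ => ?_
  rw [Skey, Finset.mul_sum, Finset.sum_mul, Finset.sum_mul]
  refine Finset.sum_congr rfl fun v _ => ?_
  ring

end Gen

section Gen2

lemma gen2 (m₂ m₃ N : ℕ) (y z₂ z₃ : ℝ) :
    ∑ v₂ ∈ Finset.range (m₂ + 1), ∑ v₃ ∈ Finset.range (m₃ + 1),
        (-1 : ℝ) ^ (v₂ + v₃) * (m₂.choose v₂) * (m₃.choose v₃)
          * (y + ((m₂ : ℝ) - 2 * v₂) * z₂ + ((m₃ : ℝ) - 2 * v₃) * z₃) ^ N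
      = ∑ k₃ ∈ Finset.range (N + 1), ∑ k₂ ∈ Finset.range (N - k₃ + 1),
          (N.choose k₃ : ℝ) * ((N - k₃).choose k₂ : ℝ)
            * Skey m₃ k₃ * Skey m₂ k₂ * z₃ ^ k₃ * z₂ ^ k₂ * y ^ (N - k₃ - k₂) := by
  have step1 : ∀ v₂ ∈ Finset.range (m₂ + 1),
      (∑ v₃ ∈ Finset.range (m₃ + 1),
        (-1 : ℝ) ^ (v₂ + v₃) * (m₂.choose v₂) * (m₃.choose v₃)
          * (y + ((m₂ : ℝ) - 2 * v₂) * z₂ + ((m₃ : ℝ) - 2 * v₃) * z₃) ^ N)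
      = ((-1 : ℝ) ^ v₂ * (m₂.choose v₂)) *
          ∑ k₃ ∈ Finset.range (N + 1),
            (N.choose k₃ : ℝ) * Skey m₃ k₃ * z₃ ^ k₃
              * (y + ((m₂ : ℝ) - 2 * v₂) * z₂) ^ (N - k₃) := by
    intro v₂ _
    rw [← gen1 m₃ N (y + ((m₂ : ℝ) - 2 * v₂) * z₂) z₃, Finset.mul_sum]
    refine Finset.sum_congr rfl fun v₃ _ => ?_
    ring
  rw [Finset.sum_congr rfl step1]
  have step2 : ∀ v₂ ∈ Finset.range (m₂ + 1),
      ((-1 : ℝ) ^ v₂ * (m₂.choose v₂)) *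
          (∑ k₃ ∈ Finset.range (N + 1),
            (N.choose k₃ : ℝ) * Skey m₃ k₃ * z₃ ^ k₃
              * (y + ((m₂ : ℝ) - 2 * v₂) * z₂) ^ (N - k₃))
      = ∑ k₃ ∈ Finset.range (N + 1),
          (N.choose k₃ : ℝ) * Skey m₃ k₃ * z₃ ^ k₃
            * ((-1 : ℝ) ^ v₂ * (m₂.choose v₂)
                * (y + ((m₂ : ℝ) - 2 * v₂) * z₂) ^ (N - k₃)) := by
    intro v₂ _
    rw [Finset.mul_sum]
    refine Finset.sum_congr rfl fun k₃ _ => ?_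
    ring
  rw [Finset.sum_congr rfl step2, Finset.sum_comm]
  refine Finset.sum_congr rfl fun k₃ _ => ?_
  rw [← Finset.mul_sum, gen1 m₂ (N - k₃) y z₂, Finset.mul_sum]
  refine Finset.sum_congr rfl fun k₂ _ => ?_
  ring

end Gen2

section Gen3

lemma gen3 (m₂ m₃ m₄ N : ℕ) (y z₂ z₃ z₄ : ℝ) :
    ∑ v₂ ∈ Finset.range (m₂ + 1), ∑ v₃ ∈ Finset.range (m₃ + 1),
      ∑ v₄ ∈ Finset.range (m₄ + 1),
        (-1 : ℝ) ^ (v₂ + v₃ + v₄) * (m₂.choose v₂) * (m₃.choose v₃) * (m₄.choose v₄)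
          * (y + ((m₂ : ℝ) - 2 * v₂) * z₂ + ((m₃ : ℝ) - 2 * v₃) * z₃
              + ((m₄ : ℝ) - 2 * v₄) * z₄) ^ N
      = ∑ k₄ ∈ Finset.range (N + 1), ∑ k₃ ∈ Finset.range (N - k₄ + 1),
          ∑ k₂ ∈ Finset.range (N - k₄ - k₃ + 1),
            (N.choose k₄ : ℝ) * ((N - k₄).choose k₃ : ℝ) * ((N - k₄ - k₃).choose k₂ : ℝ)
              * Skey m₄ k₄ * Skey m₃ k₃ * Skey m₂ k₂
              * z₄ ^ k₄ * z₃ ^ k₃ * z₂ ^ k₂ * y ^ (N - k₄ - k₃ - k₂) := by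
  have step1 : ∀ v₂ ∈ Finset.range (m₂ + 1),
      (∑ v₃ ∈ Finset.range (m₃ + 1), ∑ v₄ ∈ Finset.range (m₄ + 1),
        (-1 : ℝ) ^ (v₂ + v₃ + v₄) * (m₂.choose v₂) * (m₃.choose v₃) * (m₄.choose v₄)
          * (y + ((m₂ : ℝ) - 2 * v₂) * z₂ + ((m₃ : ℝ) - 2 * v₃) * z₃
              + ((m₄ : ℝ) - 2 * v₄) * z₄) ^ N)
      = ∑ v₃ ∈ Finset.range (m₃ + 1), ∑ k₄ ∈ Finset.range (N + 1),
          (N.choose k₄ : ℝ) * Skey m₄ k₄ * z₄ ^ k₄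
            * ((-1 : ℝ) ^ (v₂ + v₃) * (m₂.choose v₂) * (m₃.choose v₃)
                * (y + ((m₂ : ℝ) - 2 * v₂) * z₂
                    + ((m₃ : ℝ) - 2 * v₃) * z₃) ^ (N - k₄)) := by
    intro v₂ _
    refine Finset.sum_congr rfl fun v₃ _ => ?_
    calc
      (∑ v₄ ∈ Finset.range (m₄ + 1),
        (-1 : ℝ) ^ (v₂ + v₃ + v₄) * (m₂.choose v₂) * (m₃.choose v₃) * (m₄.choose v₄)
          * (y + ((m₂ : ℝ) - 2 * v₂) * z₂ + ((m₃ : ℝ) - 2 * v₃) * z₃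
              + ((m₄ : ℝ) - 2 * v₄) * z₄) ^ N)
          = ((-1 : ℝ) ^ (v₂ + v₃) * (m₂.choose v₂) * (m₃.choose v₃)) *
              ∑ v₄ ∈ Finset.range (m₄ + 1),
                (-1 : ℝ) ^ v₄ * (m₄.choose v₄)
                  * ((y + ((m₂ : ℝ) - 2 * v₂) * z₂ + ((m₃ : ℝ) - 2 * v₃) * z₃)
                      + ((m₄ : ℝ) - 2 * v₄) * z₄) ^ N := by
            rw [Finset.mul_sum]
            refine Finset.sum_congr rfl fun v₄ _ => ?_
            ring
      _ = ((-1 : ℝ) ^ (v₂ + v₃) * (m₂.choose v₂) * (m₃.choose v₃)) *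
              ∑ k₄ ∈ Finset.range (N + 1),
                (N.choose k₄ : ℝ) * Skey m₄ k₄ * z₄ ^ k₄
                  * (y + ((m₂ : ℝ) - 2 * v₂) * z₂
                      + ((m₃ : ℝ) - 2 * v₃) * z₃) ^ (N - k₄) := by
            rw [gen1]
      _ = ∑ k₄ ∈ Finset.range (N + 1),
            (N.choose k₄ : ℝ) * Skey m₄ k₄ * z₄ ^ k₄
              * ((-1 : ℝ) ^ (v₂ + v₃) * (m₂.choose v₂) * (m₃.choose v₃)
                  * (y + ((m₂ : ℝ) - 2 * v₂) * z₂
                      + ((m₃ : ℝ) - 2 * v₃) * z₃) ^ (N - k₄)) := by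
            rw [Finset.mul_sum]
            refine Finset.sum_congr rfl fun k₄ _ => ?_
            ring
  rw [Finset.sum_congr rfl step1]
  rw [Finset.sum_congr rfl
    (fun v₂ (_ : v₂ ∈ Finset.range (m₂ + 1)) => Finset.sum_comm), Finset.sum_comm]
  refine Finset.sum_congr rfl fun k₄ _ => ?_
  have pull :
      (∑ v₂ ∈ Finset.range (m₂ + 1), ∑ v₃ ∈ Finset.range (m₃ + 1),
        (N.choose k₄ : ℝ) * Skey m₄ k₄ * z₄ ^ k₄
          * ((-1 : ℝ) ^ (v₂ + v₃) * (m₂.choose v₂) * (m₃.choose v₃)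
              * (y + ((m₂ : ℝ) - 2 * v₂) * z₂
                  + ((m₃ : ℝ) - 2 * v₃) * z₃) ^ (N - k₄)))
      = (N.choose k₄ : ℝ) * Skey m₄ k₄ * z₄ ^ k₄ *
          ∑ v₂ ∈ Finset.range (m₂ + 1), ∑ v₃ ∈ Finset.range (m₃ + 1),
            (-1 : ℝ) ^ (v₂ + v₃) * (m₂.choose v₂) * (m₃.choose v₃)
              * (y + ((m₂ : ℝ) - 2 * v₂) * z₂
                  + ((m₃ : ℝ) - 2 * v₃) * z₃) ^ (N - k₄) := by
    rw [Finset.mul_sum]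
    refine Finset.sum_congr rfl fun v₂ _ => ?_
    rw [Finset.mul_sum]
  rw [pull, gen2 m₂ m₃ (N - k₄) y z₂ z₃, Finset.mul_sum]
  refine Finset.sum_congr rfl fun k₃ _ => ?_
  rw [Finset.mul_sum]
  refine Finset.sum_congr rfl fun k₂ _ => ?_
  ring

end Gen3

section Collapse

lemma collapse (a₂ a₃ a₄ : ℕ) (x₁ x₂ x₃ x₄ : ℝ) :
    ∑ k₄ ∈ Finset.range (1 + a₂ + a₃ + a₄ + 1),
      ∑ k₃ ∈ Finset.range (1 + a₂ + a₃ + a₄ - k₄ + 1),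
        ∑ k₂ ∈ Finset.range (1 + a₂ + a₃ + a₄ - k₄ - k₃ + 1),
          ((1 + a₂ + a₃ + a₄).choose k₄ : ℝ)
            * ((1 + a₂ + a₃ + a₄ - k₄).choose k₃ : ℝ)
            * ((1 + a₂ + a₃ + a₄ - k₄ - k₃).choose k₂ : ℝ)
            * Skey a₄ k₄ * Skey a₃ k₃ * Skey a₂ k₂
            * x₄ ^ k₄ * x₃ ^ k₃ * x₂ ^ k₂ * x₁ ^ (1 + a₂ + a₃ + a₄ - k₄ - k₃ - k₂)
      = 2 ^ (a₂ + a₃ + a₄) * ((1 + a₂ + a₃ + a₄).factorial : ℝ)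
          * (x₁ * x₂ ^ a₂ * x₃ ^ a₃ * x₄ ^ a₄) := by
  rw [Finset.sum_eq_single_of_mem a₄ (Finset.mem_range.mpr (by omega))
    (fun k₄ hk₄ hne => Finset.sum_eq_zero fun k₃ hk₃ => Finset.sum_eq_zero fun k₂ hk₂ => by
      have hz := Skey_prod_eq_zero a₂ a₃ a₄ k₂ k₃ k₄
        (by
          have h4 := Finset.mem_range.mp hk₄
          have h3 := Finset.mem_range.mp hk₃
          have h2 := Finset.mem_range.mp hk₂
          omega)
        (by tauto)
      calc ((1 + a₂ + a₃ + a₄).choose k₄ : ℝ)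
            * ((1 + a₂ + a₃ + a₄ - k₄).choose k₃ : ℝ)
            * ((1 + a₂ + a₃ + a₄ - k₄ - k₃).choose k₂ : ℝ)
            * Skey a₄ k₄ * Skey a₃ k₃ * Skey a₂ k₂
            * x₄ ^ k₄ * x₃ ^ k₃ * x₂ ^ k₂ * x₁ ^ (1 + a₂ + a₃ + a₄ - k₄ - k₃ - k₂)
          = (((1 + a₂ + a₃ + a₄).choose k₄ : ℝ)
            * ((1 + a₂ + a₃ + a₄ - k₄).choose k₃ : ℝ)
            * ((1 + a₂ + a₃ + a₄ - k₄ - k₃).choose k₂ : ℝ)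
            * x₄ ^ k₄ * x₃ ^ k₃ * x₂ ^ k₂ * x₁ ^ (1 + a₂ + a₃ + a₄ - k₄ - k₃ - k₂))
            * (Skey a₂ k₂ * Skey a₃ k₃ * Skey a₄ k₄) := by ring
        _ = 0 := by rw [hz, mul_zero])]
  rw [show 1 + a₂ + a₃ + a₄ - a₄ = 1 + a₂ + a₃ from by omega]
  rw [Finset.sum_eq_single_of_mem a₃ (Finset.mem_range.mpr (by omega))
    (fun k₃ hk₃ hne => Finset.sum_eq_zero fun k₂ hk₂ => by
      have hz := Skey_prod_eq_zero a₂ a₃ a₄ k₂ k₃ a₄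
        (by
          have h3 := Finset.mem_range.mp hk₃
          have h2 := Finset.mem_range.mp hk₂
          omega)
        (by tauto)
      calc ((1 + a₂ + a₃ + a₄).choose a₄ : ℝ)
            * ((1 + a₂ + a₃).choose k₃ : ℝ)
            * ((1 + a₂ + a₃ - k₃).choose k₂ : ℝ)
            * Skey a₄ a₄ * Skey a₃ k₃ * Skey a₂ k₂
            * x₄ ^ a₄ * x₃ ^ k₃ * x₂ ^ k₂ * x₁ ^ (1 + a₂ + a₃ - k₃ - k₂)
          = (((1 + a₂ + a₃ + a₄).choose a₄ : ℝ)
            * ((1 + a₂ + a₃).choose k₃ : ℝ)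
            * ((1 + a₂ + a₃ - k₃).choose k₂ : ℝ)
            * x₄ ^ a₄ * x₃ ^ k₃ * x₂ ^ k₂ * x₁ ^ (1 + a₂ + a₃ - k₃ - k₂))
            * (Skey a₂ k₂ * Skey a₃ k₃ * Skey a₄ a₄) := by ring
        _ = 0 := by rw [hz, mul_zero])]
  rw [show 1 + a₂ + a₃ - a₃ = 1 + a₂ from by omega]
  rw [Finset.sum_eq_single_of_mem a₂ (Finset.mem_range.mpr (by omega))
    (fun k₂ hk₂ hne => by
      have hz := Skey_prod_eq_zero a₂ a₃ a₄ k₂ a₃ a₄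
        (by
          have h2 := Finset.mem_range.mp hk₂
          omega)
        (by tauto)
      calc ((1 + a₂ + a₃ + a₄).choose a₄ : ℝ)
            * ((1 + a₂ + a₃).choose a₃ : ℝ)
            * ((1 + a₂).choose k₂ : ℝ)
            * Skey a₄ a₄ * Skey a₃ a₃ * Skey a₂ k₂
            * x₄ ^ a₄ * x₃ ^ a₃ * x₂ ^ k₂ * x₁ ^ (1 + a₂ - k₂)
          = (((1 + a₂ + a₃ + a₄).choose a₄ : ℝ)
            * ((1 + a₂ + a₃).choose a₃ : ℝ)
            * ((1 + a₂).choose k₂ : ℝ)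
            * x₄ ^ a₄ * x₃ ^ a₃ * x₂ ^ k₂ * x₁ ^ (1 + a₂ - k₂))
            * (Skey a₂ k₂ * Skey a₃ a₃ * Skey a₄ a₄) := by ring
        _ = 0 := by rw [hz, mul_zero])]
  rw [show 1 + a₂ - a₂ = 1 from by omega]
  rw [Skey_self, Skey_self, Skey_self]
  have hfac : ((1 + a₂ + a₃ + a₄).choose a₄) * ((1 + a₂ + a₃).choose a₃)
      * ((1 + a₂).choose a₂) * (a₄.factorial * (a₃.factorial * a₂.factorial))
      = (1 + a₂ + a₃ + a₄).factorial := by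
    have e1 := Nat.choose_mul_factorial_mul_factorial (show a₂ ≤ 1 + a₂ from by omega)
    have e2 := Nat.choose_mul_factorial_mul_factorial (show a₃ ≤ 1 + a₂ + a₃ from by omega)
    have e3 := Nat.choose_mul_factorial_mul_factorial
      (show a₄ ≤ 1 + a₂ + a₃ + a₄ from by omega)
    rw [show 1 + a₂ - a₂ = 1 from by omega, Nat.factorial_one, mul_one] at e1
    rw [show 1 + a₂ + a₃ - a₃ = 1 + a₂ from by omega] at e2
    rw [show 1 + a₂ + a₃ + a₄ - a₄ = 1 + a₂ + a₃ from by omega] at e3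
    rw [← e3, ← e2, ← e1]
    ring
  have hR : (((1 + a₂ + a₃ + a₄).choose a₄ : ℝ)) * (((1 + a₂ + a₃).choose a₃ : ℝ))
      * (((1 + a₂).choose a₂ : ℝ)) * ((a₄.factorial : ℝ) * ((a₃.factorial : ℝ) * (a₂.factorial : ℝ)))
      = ((1 + a₂ + a₃ + a₄).factorial : ℝ) := by exact_mod_cast hfac
  have hpow : (2 : ℝ) ^ a₄ * (2 : ℝ) ^ a₃ * (2 : ℝ) ^ a₂ = 2 ^ (a₂ + a₃ + a₄) := by
    rw [← pow_add, ← pow_add]; ring_nf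
  linear_combination
    ((2 : ℝ) ^ (a₂ + a₃ + a₄) * (x₁ * x₂ ^ a₂ * x₃ ^ a₃ * x₄ ^ a₄)) * hR
      + (((1 + a₂ + a₃ + a₄).choose a₄ : ℝ) * (((1 + a₂ + a₃).choose a₃ : ℝ))
          * (((1 + a₂).choose a₂ : ℝ)) * ((a₄.factorial : ℝ) * ((a₃.factorial : ℝ) * (a₂.factorial : ℝ)))
          * (x₁ * x₂ ^ a₂ * x₃ ^ a₃ * x₄ ^ a₄)) * hpow

end Collapse

open scoped BigOperators

/-- Decomposition of the monomial `x₁ · x₂^{a₂} · x₃^{a₃} · x₄^{a₄}` as a signed linear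
combination of `a`-th powers of linear combinations of the variables, where
`a = 1 + a₂ + a₃ + a₄`.  This identity underlies continuous-variable gate synthesis. -/
theorem monomial_power_decomposition (a₂ a₃ a₄ : ℕ) (x₁ x₂ x₃ x₄ : ℝ) :
    x₁ * x₂ ^ a₂ * x₃ ^ a₃ * x₄ ^ a₄ =
      ∑ v₂ ∈ Finset.range (a₂ + 1), ∑ v₃ ∈ Finset.range (a₃ + 1),
        ∑ v₄ ∈ Finset.range (a₄ + 1),
          (((-1 : ℝ) ^ (v₂ + v₃ + v₄) / (2 ^ (1 + a₂ + a₃ + a₄ - 1)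
              * Nat.factorial (1 + a₂ + a₃ + a₄)))
            * (a₂.choose v₂) * (a₃.choose v₃) * (a₄.choose v₄))
          * (x₁ + ((a₂ : ℝ) - 2 * v₂) * x₂ + ((a₃ : ℝ) - 2 * v₃) * x₃
              + ((a₄ : ℝ) - 2 * v₄) * x₄) ^ (1 + a₂ + a₃ + a₄) := by
  rw [show 1 + a₂ + a₃ + a₄ - 1 = a₂ + a₃ + a₄ from by omega]
  have hD : (2 : ℝ) ^ (a₂ + a₃ + a₄) * ((1 + a₂ + a₃ + a₄).factorial : ℝ) ≠ 0 := by
    positivity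
  have h1 : (∑ v₂ ∈ Finset.range (a₂ + 1), ∑ v₃ ∈ Finset.range (a₃ + 1),
        ∑ v₄ ∈ Finset.range (a₄ + 1),
          (((-1 : ℝ) ^ (v₂ + v₃ + v₄) / (2 ^ (a₂ + a₃ + a₄)
              * Nat.factorial (1 + a₂ + a₃ + a₄)))
            * (a₂.choose v₂) * (a₃.choose v₃) * (a₄.choose v₄))
          * (x₁ + ((a₂ : ℝ) - 2 * v₂) * x₂ + ((a₃ : ℝ) - 2 * v₃) * x₃
              + ((a₄ : ℝ) - 2 * v₄) * x₄) ^ (1 + a₂ + a₃ + a₄))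
      = (1 / ((2 : ℝ) ^ (a₂ + a₃ + a₄) * ((1 + a₂ + a₃ + a₄).factorial : ℝ))) *
          ∑ v₂ ∈ Finset.range (a₂ + 1), ∑ v₃ ∈ Finset.range (a₃ + 1),
            ∑ v₄ ∈ Finset.range (a₄ + 1),
              (-1 : ℝ) ^ (v₂ + v₃ + v₄) * (a₂.choose v₂) * (a₃.choose v₃) * (a₄.choose v₄)
                * (x₁ + ((a₂ : ℝ) - 2 * v₂) * x₂ + ((a₃ : ℝ) - 2 * v₃) * x₃
                    + ((a₄ : ℝ) - 2 * v₄) * x₄) ^ (1 + a₂ + a₃ + a₄) := by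
    rw [Finset.mul_sum]
    refine Finset.sum_congr rfl fun v₂ _ => ?_
    rw [Finset.mul_sum]
    refine Finset.sum_congr rfl fun v₃ _ => ?_
    rw [Finset.mul_sum]
    refine Finset.sum_congr rfl fun v₄ _ => ?_
    ring
  rw [h1, gen3 a₂ a₃ a₄ (1 + a₂ + a₃ + a₄) x₁ x₂ x₃ x₄, collapse a₂ a₃ a₄ x₁ x₂ x₃ x₄,
    ← mul_assoc, one_div_mul_cancel hD, one_mul]
end

section
/- Let A be an associative unital ℂ-algebra and let p, x, y ∈ A satisfy p·x − x·p = −i·1, p·y = y·p, and x·y = y·x. Let ad_{ipy} denote the map A → A given by ad_{ipy}(B) = (i·p·y)·B − B·(i·p·y). Then for every natural number a, the (terminating) Baker–Campbell–Hausdorff series evaluates exactly: Σ_{k=0}^{a} (1/k!) · ad_{ipy}^k (x^a) = (x + y)^a. (This is the algebraic content of the conjugation identity e^{iP₁X₂} e^{isX₁^a} e^{−iP₁X₂} = e^{is(X₁+X₂)^a} used in the gate decomposition.) -/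
open scoped BigOperators

/-- If `[p,x] = -i`, `[p,y] = 0`, `[x,y] = 0`, then the terminating
Baker–Campbell–Hausdorff series for conjugation of `xᵃ` by `e^{i·p·y}` sums exactly:
`Σ_{k=0}^{a} (1/k!) · ad_{i·p·y}ᵏ (xᵃ) = (x + y)ᵃ`.  This is the algebraic content of the
identity `e^{iP₁X₂} e^{isX₁ᵃ} e^{−iP₁X₂} = e^{is(X₁+X₂)ᵃ}` used in gate decomposition. -/
theorem bch_series_ipy_pow (A : Type*) [Ring A] [Algebra ℂ A]
    (p x y : A)
    (hpx : p * x - x * p = -(Complex.I • (1 : A)))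
    (hpy : p * y = y * p) (hxy : x * y = y * x)
    (a : ℕ) :
    ∑ k ∈ Finset.range (a + 1),
        ((Nat.factorial k : ℂ))⁻¹ •
          (fun B => (Complex.I • (p * y)) * B - B * (Complex.I • (p * y)))^[k] (x ^ a)
      = (x + y) ^ a := by
  set D : A → A := fun B => (Complex.I • (p * y)) * B - B * (Complex.I • (p * y)) with hD
  have hDgen : ∀ u : A, D u = Complex.I • (p * y * u - u * (p * y)) := by
    intro u; simp [hD, smul_mul_assoc, mul_smul_comm, smul_sub]
  have hDx : D x = y := by
    rw [hDgen]
    have h1 : p * y * x - x * (p * y) = (p * x - x * p) * y := by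
      rw [sub_mul, mul_assoc p y x, ← hxy, ← mul_assoc, ← mul_assoc]
    rw [h1, hpx]
    rw [neg_mul, smul_mul_assoc, one_mul, smul_neg, smul_smul, Complex.I_mul_I]
    simp
  have hDy : D y = 0 := by
    rw [hDgen]
    have : p * y * y - y * (p * y) = (p * y - y * p) * y := by
      noncomm_ring
    rw [this, hpy, sub_self, zero_mul, smul_zero]
  have hDmul : ∀ u v : A, D (u * v) = D u * v + u * D v := by
    intro u v; simp only [hD]; noncomm_ring
  have hDsmul : ∀ (c : ℂ) (u : A), D (c • u) = c • D u := by
    intro c u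
    rw [hDgen, hDgen, mul_smul_comm, smul_mul_assoc, ← smul_sub, smul_comm]
  have hDypow : ∀ k : ℕ, D (y ^ k) = 0 := by
    intro k; induction k with
    | zero => simp [hD]
    | succ n ih => rw [pow_succ, hDmul, ih, hDy, zero_mul, mul_zero, add_zero]
  have hcyx : Commute y x := hxy.symm
  have hDxpow : ∀ n : ℕ, D (x ^ (n + 1)) = ((n + 1 : ℕ) : ℂ) • (x ^ n * y) := by
    intro n; induction n with
    | zero => simpa using hDx
    | succ n ih =>
      rw [pow_succ, hDmul, ih, hDx, smul_mul_assoc, mul_assoc, hxy.symm, ← mul_assoc,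
        ← pow_succ]
      rw [show ((n + 1 + 1 : ℕ) : ℂ) = ((n + 1 : ℕ) : ℂ) + 1 by push_cast; ring, add_smul,
        one_smul]
  have hkey : ∀ k, k ≤ a → D^[k] (x ^ a) =
      ((a.descFactorial k : ℕ) : ℂ) • (x ^ (a - k) * y ^ k) := by
    intro k; induction k with
    | zero => intro _; simp
    | succ k ih =>
      intro hk
      have hk' : k ≤ a := Nat.le_of_succ_le hk
      rw [Function.iterate_succ_apply', ih hk', hDsmul, hDmul, hDypow, mul_zero, add_zero]
      have hak : a - k = (a - (k + 1)) + 1 := by omega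
      rw [hak, hDxpow, smul_mul_assoc, smul_smul]
      rw [Nat.descFactorial_succ, ← hak, mul_assoc, ← pow_succ']
      push_cast
      rw [mul_comm]
  have hsum : ∀ k ∈ Finset.range (a + 1),
      ((Nat.factorial k : ℂ))⁻¹ • D^[k] (x ^ a)
        = x ^ (a - k) * y ^ k * ((a.choose k : ℕ) : A) := by
    intro k hk
    rw [hkey k (Nat.lt_succ_iff.mp (Finset.mem_range.mp hk)), smul_smul,
      Nat.descFactorial_eq_factorial_mul_choose]
    push_cast
    rw [inv_mul_cancel_left₀ (by exact_mod_cast k.factorial_ne_zero)]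
    rw [Nat.cast_smul_eq_nsmul, nsmul_eq_mul, (Nat.cast_commute (a.choose k) _).eq]
  rw [Finset.sum_congr rfl hsum]
  have := (hcyx.add_pow a)
  rw [add_comm y x] at this
  rw [this]
  refine Finset.sum_congr rfl fun k hk => ?_
  rw [(hcyx.pow_pow k (a - k)).eq]
end
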